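/- Qubit SU(2) covariance: the only channels on a qubit covariant with respect to the full adjoint action of SU(2) are E_λ(ρ) = ½(1 + λ r·σ) with λ ∈ [-1/3, 1], where r is the Bloch vector of ρ. Consequently, for η with Bloch vector x (writing x̄ = (x,-y,z)), the optimal value max_{E covariant} Tr[η^T E(ρ)] equals ½(1 + x̄·r) if x̄·r ≥ 0, and ½(1 - (1/3) x̄·r) otherwise. -/

import Mathlib

open Matrix
open scoped ComplexOrder

/-- Ampliation `id_k ⊗ L` of a linear map on matrices. -/
def amplA {k A B : Type} (L : Matrix A A ℂ →ₗ[ℂ] Matrix B B ℂ)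
    (M : Matrix (k × A) (k × A) ℂ) : Matrix (k × B) (k × B) ℂ :=
  fun p q => L (Matrix.of fun a b => M (p.1, a) (q.1, b)) p.2 q.2

/-- Complete positivity of a linear map between matrix algebras. -/
def IsCompletelyPositive {A B : Type} [Fintype A] [Fintype B]
    (L : Matrix A A ℂ →ₗ[ℂ] Matrix B B ℂ) : Prop :=
  ∀ (k : Type) [Fintype k] [DecidableEq k],
    ∀ M : Matrix (k × A) (k × A) ℂ, M.PosSemidef → (amplA L M).PosSemidef

/-- Covariance with respect to the (full) adjoint action of the unitary group of the
qubit (equivalently, the adjoint action of SU(2)). -/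
def IsUnitarilyCovariant (E : Matrix (Fin 2) (Fin 2) ℂ →ₗ[ℂ] Matrix (Fin 2) (Fin 2) ℂ) :
    Prop :=
  ∀ U : Matrix (Fin 2) (Fin 2) ℂ, U ∈ Matrix.unitaryGroup (Fin 2) ℂ →
    ∀ M : Matrix (Fin 2) (Fin 2) ℂ, E (U * M * Uᴴ) = U * E M * Uᴴ

noncomputable def pauliX : Matrix (Fin 2) (Fin 2) ℂ := !![0, 1; 1, 0]
noncomputable def pauliY : Matrix (Fin 2) (Fin 2) ℂ := !![0, -Complex.I; Complex.I, 0]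
noncomputable def pauliZ : Matrix (Fin 2) (Fin 2) ℂ := !![1, 0; 0, -1]

/-- Qubit state with Bloch vector `r`: `ρ = ½(𝟙 + r·σ)`. -/
noncomputable def blochState (r : Fin 3 → ℝ) : Matrix (Fin 2) (Fin 2) ℂ :=
  ((1 : ℝ) / 2) • ((1 : Matrix (Fin 2) (Fin 2) ℂ)
    + (r 0) • pauliX + (r 1) • pauliY + (r 2) • pauliZ)









lemma psd_smul_real {n : Type*} [Fintype n] {M : Matrix n n ℂ} (hM : M.PosSemidef)
    {c : ℝ} (hc : 0 ≤ c) : (c • M).PosSemidef := by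
  have h : (c • M) = (c : ℂ) • M := by ext i j; simp [Complex.real_smul]
  rw [h]
  refine Matrix.PosSemidef.of_dotProduct_mulVec_nonneg ?_ ?_
  · unfold Matrix.IsHermitian
    rw [conjTranspose_smul]
    simp [hM.1.eq]
  · intro y
    rw [smul_mulVec, dotProduct_smul]
    have h0 : (0:ℂ) ≤ (c:ℂ) := by exact_mod_cast Complex.zero_le_real.mpr hc
    simpa using mul_nonneg h0 (hM.dotProduct_mulVec_nonneg y)

lemma depol_kraus (l : ℝ) (M : Matrix (Fin 2) (Fin 2) ℂ) :
    l • M + (((1 - l) / 2) • (Matrix.trace M • (1 : Matrix (Fin 2) (Fin 2) ℂ)))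
      = ((1+3*l)/4 : ℝ) • M + (((1-l)/4 : ℝ) • (pauliX * M * pauliXᴴ)
        + ((1-l)/4 : ℝ) • (pauliY * M * pauliYᴴ) + ((1-l)/4 : ℝ) • (pauliZ * M * pauliZᴴ)) := by
  ext i j
  fin_cases i <;> fin_cases j <;>
    simp [pauliX, pauliY, pauliZ, Matrix.mul_apply, Matrix.trace_fin_two, Fin.sum_univ_two,
      Matrix.one_apply, Complex.real_smul, Matrix.vecMul, dotProduct,
      Matrix.conjTranspose_apply, Complex.ext_iff] <;> ring_nf <;> simp <;> ring_nf

def kronB (k : Type) [DecidableEq k] (A : Matrix (Fin 2) (Fin 2) ℂ) :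
    Matrix (k × Fin 2) (k × Fin 2) ℂ :=
  fun p q => if p.1 = q.1 then A p.2 q.2 else 0

lemma kron_conj {k : Type} [Fintype k] [DecidableEq k] (A : Matrix (Fin 2) (Fin 2) ℂ)
    (M : Matrix (k × Fin 2) (k × Fin 2) ℂ) (p q : k × Fin 2) :
    (kronB k A * M * (kronB k A)ᴴ) p q
      = (A * (Matrix.of fun a b => M (p.1, a) (q.1, b)) * Aᴴ) p.2 q.2 := by
  simp only [Matrix.mul_apply, Matrix.conjTranspose_apply, kronB, Fintype.sum_prod_type,
    Matrix.of_apply, apply_ite, ite_mul, mul_ite, star_zero, zero_mul, mul_zero,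
    Finset.sum_ite_eq, Finset.sum_ite_eq', Finset.mem_univ, if_true]
  have h1 : ∀ (f : k → Fin 2 → ℂ) (c : k),
      (∑ x : k, ∑ y : Fin 2, if c = x then f x y else 0) = ∑ y, f c y := by
    intro f c
    rw [Finset.sum_comm]
    simp
  simp only [h1]

lemma depol_cp (l : ℝ) (hl : l ∈ Set.Icc (-(1/3):ℝ) 1)
    (E : Matrix (Fin 2) (Fin 2) ℂ →ₗ[ℂ] Matrix (Fin 2) (Fin 2) ℂ)
    (hE : ∀ M, E M = l • M + (((1 - l) / 2) • (Matrix.trace M • (1 : Matrix (Fin 2) (Fin 2) ℂ)))) :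
    IsCompletelyPositive E := by
  intro k _ _ M hM
  have key : amplA E M = ((1+3*l)/4 : ℝ) • M
      + (((1-l)/4 : ℝ) • (kronB k pauliX * M * (kronB k pauliX)ᴴ)
        + ((1-l)/4 : ℝ) • (kronB k pauliY * M * (kronB k pauliY)ᴴ)
        + ((1-l)/4 : ℝ) • (kronB k pauliZ * M * (kronB k pauliZ)ᴴ)) := by
    ext p q
    show E (Matrix.of fun a b => M (p.1, a) (q.1, b)) p.2 q.2 = _
    rw [hE, depol_kraus]
    simp only [Matrix.add_apply, Matrix.smul_apply, kron_conj, Matrix.of_apply]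
  rw [key]
  have h0 : (0:ℝ) ≤ (1+3*l)/4 := by linarith [hl.1]
  have h1 : (0:ℝ) ≤ (1-l)/4 := by linarith [hl.2]
  exact (psd_smul_real hM h0).add
    (((psd_smul_real (hM.mul_mul_conjTranspose_same _) h1).add
      (psd_smul_real (hM.mul_mul_conjTranspose_same _) h1)).add
      (psd_smul_real (hM.mul_mul_conjTranspose_same _) h1))

lemma depol_tp (l : ℝ)
    (E : Matrix (Fin 2) (Fin 2) ℂ →ₗ[ℂ] Matrix (Fin 2) (Fin 2) ℂ)
    (hE : ∀ M, E M = l • M + (((1 - l) / 2) • (Matrix.trace M • (1 : Matrix (Fin 2) (Fin 2) ℂ)))) :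
    ∀ M, Matrix.trace (E M) = Matrix.trace M := by
  intro M
  rw [hE]
  simp [Matrix.trace_smul, Matrix.trace_one, Complex.real_smul, smul_eq_mul]
  ring

lemma depol_cov (l : ℝ)
    (E : Matrix (Fin 2) (Fin 2) ℂ →ₗ[ℂ] Matrix (Fin 2) (Fin 2) ℂ)
    (hE : ∀ M, E M = l • M + (((1 - l) / 2) • (Matrix.trace M • (1 : Matrix (Fin 2) (Fin 2) ℂ)))) :
    IsUnitarilyCovariant E := by
  intro U hU M
  have h1 : Uᴴ * U = 1 := by
    have := hU.1
    rwa [Matrix.star_eq_conjTranspose] at this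
  have h2 : U * Uᴴ = 1 := by
    have := hU.2
    rwa [Matrix.star_eq_conjTranspose] at this
  have htr : Matrix.trace (U * M * Uᴴ) = Matrix.trace M := by
    rw [Matrix.trace_mul_cycle, h1, Matrix.one_mul]
  rw [hE, hE, htr]
  rw [Matrix.mul_add, Matrix.add_mul]
  congr 1
  · rw [Matrix.mul_smul, Matrix.smul_mul]
  · rw [Matrix.mul_smul, Matrix.smul_mul, Matrix.mul_smul, Matrix.smul_mul,
      Matrix.mul_one, h2]


noncomputable def e00 : Matrix (Fin 2) (Fin 2) ℂ := !![1,0;0,0]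
noncomputable def e01 : Matrix (Fin 2) (Fin 2) ℂ := !![0,1;0,0]
noncomputable def e10 : Matrix (Fin 2) (Fin 2) ℂ := !![0,0;1,0]
noncomputable def e11 : Matrix (Fin 2) (Fin 2) ℂ := !![0,0;0,1]
noncomputable def U1 : Matrix (Fin 2) (Fin 2) ℂ := !![1,0;0,Complex.I]
noncomputable def UX : Matrix (Fin 2) (Fin 2) ℂ := !![0,1;1,0]
noncomputable def UH : Matrix (Fin 2) (Fin 2) ℂ :=
  (((Real.sqrt 2)⁻¹ : ℝ) : ℂ) • !![1,1;1,-1]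

lemma hU1mem : U1 ∈ Matrix.unitaryGroup (Fin 2) ℂ := by
  constructor <;>
  · ext i j
    fin_cases i <;> fin_cases j <;>
      simp [U1, Matrix.mul_apply, Fin.sum_univ_two, Matrix.one_apply,
        Matrix.conjTranspose_apply, Complex.ext_iff]

lemma hUXmem : UX ∈ Matrix.unitaryGroup (Fin 2) ℂ := by
  constructor <;>
  · ext i j
    fin_cases i <;> fin_cases j <;>
      simp [UX, Matrix.mul_apply, Fin.sum_univ_two, Matrix.one_apply,
        Matrix.conjTranspose_apply, Complex.ext_iff]

lemma sqrt2_mul : (((Real.sqrt 2)⁻¹ : ℝ) : ℂ) * (((Real.sqrt 2)⁻¹ : ℝ) : ℂ) = 1/2 := by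
  rw [← Complex.ofReal_mul, ← mul_inv, Real.mul_self_sqrt (by norm_num)]
  norm_num

lemma sqrt2_pow : ((Real.sqrt 2 : ℝ) : ℂ) ^ 2 = 2 := by
  rw [← Complex.ofReal_pow, Real.sq_sqrt (by norm_num)]
  norm_num

lemma hUHmem : UH ∈ Matrix.unitaryGroup (Fin 2) ℂ := by
  constructor <;>
  · ext i j
    fin_cases i <;> fin_cases j <;>
      simp [UH, Matrix.mul_apply, Fin.sum_univ_two, Matrix.one_apply,
        Matrix.conjTranspose_apply, Matrix.smul_apply, smul_eq_mul] <;>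
      ring_nf <;> simp [sqrt2_pow] <;> norm_num

section classify
variable (E : Matrix (Fin 2) (Fin 2) ℂ →ₗ[ℂ] Matrix (Fin 2) (Fin 2) ℂ)


lemma structural (hTP : ∀ M, Matrix.trace (E M) = Matrix.trace M)
    (hCov : IsUnitarilyCovariant E) :
    ∀ M, E M = (E e01 0 1) • M
      + (((1 - E e01 0 1) / 2) • (Matrix.trace M • (1 : Matrix (Fin 2) (Fin 2) ℂ))) := by
  set A := E e00 with hA
  set B := E e01 with hB
  set C := E e10 with hC
  set D := E e11 with hD
  -- U1 covariance on e00 : A = U1 A U1ᴴ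
  have c1 : A = U1 * A * U1ᴴ := by
    have h := hCov U1 hU1mem e00
    have h2 : U1 * e00 * U1ᴴ = e00 := by
      ext i j; fin_cases i <;> fin_cases j <;>
        simp [U1, e00, Matrix.mul_apply, Fin.sum_univ_two, Matrix.conjTranspose_apply]
    rwa [h2] at h
  have hA01 : A 0 1 = 0 := by
    have h := congrFun (congrFun c1 0) 1
    simp [U1, Matrix.mul_apply, Fin.sum_univ_two, Matrix.conjTranspose_apply, Matrix.vecMul, dotProduct] at h
    have h' : A 0 1 * (1 + Complex.I) = 0 := by linear_combination h
    rcases mul_eq_zero.mp h' with h'' | h''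
    · exact h''
    · exfalso; simp [Complex.ext_iff] at h''
  have hA10 : A 1 0 = 0 := by
    have h := congrFun (congrFun c1 1) 0
    simp [U1, Matrix.mul_apply, Fin.sum_univ_two, Matrix.conjTranspose_apply, Matrix.vecMul, dotProduct] at h
    have h' : A 1 0 * (1 - Complex.I) = 0 := by linear_combination h
    rcases mul_eq_zero.mp h' with h'' | h''
    · exact h''
    · exfalso; simp [Complex.ext_iff] at h''
  -- U1 covariance on e01
  have c2 : (-Complex.I) • B = U1 * B * U1ᴴ := by
    have h2 : U1 * e01 * U1ᴴ = (-Complex.I) • e01 := by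
      ext i j; fin_cases i <;> fin_cases j <;>
        simp [U1, e01, Matrix.mul_apply, Fin.sum_univ_two, Matrix.conjTranspose_apply,
          Matrix.vecMul, dotProduct]
    have h := hCov U1 hU1mem e01
    rw [h2, LinearMap.map_smul] at h
    exact h
  have hB00 : B 0 0 = 0 := by
    have h := congrFun (congrFun c2 0) 0
    simp [U1, Matrix.mul_apply, Fin.sum_univ_two, Matrix.conjTranspose_apply,
      Matrix.vecMul, dotProduct, Matrix.smul_apply] at h
    have h' : B 0 0 * (1 + Complex.I) = 0 := by linear_combination -h
    rcases mul_eq_zero.mp h' with h'' | h''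
    · exact h''
    · exfalso; simp [Complex.ext_iff] at h''
  have hB10 : B 1 0 = 0 := by
    have h := congrFun (congrFun c2 1) 0
    simp [U1, Matrix.mul_apply, Fin.sum_univ_two, Matrix.conjTranspose_apply,
      Matrix.vecMul, dotProduct, Matrix.smul_apply] at h
    have h' : B 1 0 * (2 * Complex.I) = 0 := by linear_combination -h
    rcases mul_eq_zero.mp h' with h'' | h''
    · exact h''
    · exfalso; simp [Complex.ext_iff] at h''
  have hB11 : B 1 1 = 0 := by
    have h := congrFun (congrFun c2 1) 1
    simp [U1, Matrix.mul_apply, Fin.sum_univ_two, Matrix.conjTranspose_apply,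
      Matrix.vecMul, dotProduct, Matrix.smul_apply] at h
    have h' : B 1 1 * (1 - Complex.I) = 0 := by
      linear_combination (-Complex.I) * h + (B 1 1 - B 1 1 * Complex.I) * Complex.I_mul_I
    rcases mul_eq_zero.mp h' with h'' | h''
    · exact h''
    · exfalso; simp [Complex.ext_iff] at h''
  set lC := B 0 1 with hlC
  have hBfull : B = lC • e01 := by
    ext i j; fin_cases i <;> fin_cases j <;>
      simp [e01, hB00, hB10, hB11, Matrix.smul_apply, hlC]
  -- X covariance
  have c4 : D = UX * A * UXᴴ := by
    have h2 : UX * e00 * UXᴴ = e11 := by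
      ext i j; fin_cases i <;> fin_cases j <;>
        simp [UX, e00, e11, Matrix.mul_apply, Fin.sum_univ_two, Matrix.conjTranspose_apply,
          Matrix.vecMul, dotProduct]
    have h := hCov UX hUXmem e00
    rwa [h2] at h
  have c5 : C = lC • e10 := by
    have h2 : UX * e01 * UXᴴ = e10 := by
      ext i j; fin_cases i <;> fin_cases j <;>
        simp [UX, e01, e10, Matrix.mul_apply, Fin.sum_univ_two, Matrix.conjTranspose_apply,
          Matrix.vecMul, dotProduct]
    have h := hCov UX hUXmem e01
    rw [h2, ← hB, ← hC, hBfull] at h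
    rw [h]
    ext i j; fin_cases i <;> fin_cases j <;>
      simp [UX, e01, e10, Matrix.mul_apply, Fin.sum_univ_two, Matrix.conjTranspose_apply,
        Matrix.vecMul, dotProduct, Matrix.smul_apply]
  -- trace preservation on e00
  have hTPA : A 0 0 + A 1 1 = 1 := by
    have h := hTP e00
    rw [← hA] at h
    simpa [Matrix.trace_fin_two, e00] using h
  -- Hadamard covariance on e01 : entry (0,0)
  have hvals : A 0 0 - A 1 1 = lC := by
    have h2 : UH * e01 * UHᴴ = (1/2 : ℂ) • e00 - (1/2 : ℂ) • e01
        + (1/2 : ℂ) • e10 - (1/2 : ℂ) • e11 := by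
      ext i j; fin_cases i <;> fin_cases j <;>
        simp [UH, e00, e01, e10, e11, Matrix.mul_apply, Fin.sum_univ_two,
          Matrix.conjTranspose_apply, Matrix.vecMul, dotProduct,
          Matrix.smul_apply, smul_eq_mul] <;> ring_nf <;> simp [sqrt2_pow] <;> norm_num
    have h := hCov UH hUHmem e01
    rw [h2] at h
    rw [map_sub, map_add, map_sub, LinearMap.map_smul, LinearMap.map_smul, LinearMap.map_smul, LinearMap.map_smul] at h
    rw [← hA, ← hB, ← hC, ← hD, hBfull, c5, c4] at h
    have h00 := congrFun (congrFun h 0) 0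
    simp [UH, UX, e00, e01, e10, e11, Matrix.mul_apply, Fin.sum_univ_two,
      Matrix.conjTranspose_apply, Matrix.vecMul, dotProduct, Matrix.smul_apply,
      Matrix.add_apply, Matrix.sub_apply, smul_eq_mul, hA01, hA10] at h00
    -- h00 should now relate A 0 0, A 1 1, lC with sqrt2 coefficients
    ring_nf at h00
    rw [show ((Real.sqrt 2 : ℝ) : ℂ)⁻¹ ^ 2 = 1/2 by
      rw [inv_pow, sqrt2_pow]; norm_num] at h00
    linear_combination 2 * h00
  have hA00 : A 0 0 = (1 + lC) / 2 := by linear_combination (hTPA + hvals) / 2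
  have hA11 : A 1 1 = (1 - lC) / 2 := by linear_combination (hTPA - hvals) / 2
  -- assemble
  intro M
  have hMdec : M = M 0 0 • e00 + M 0 1 • e01 + M 1 0 • e10 + M 1 1 • e11 := by
    ext i j; fin_cases i <;> fin_cases j <;>
      simp [e00, e01, e10, e11, Matrix.smul_apply, Matrix.add_apply]
  conv_lhs => rw [hMdec]
  rw [map_add, map_add, map_add, LinearMap.map_smul, LinearMap.map_smul, LinearMap.map_smul, LinearMap.map_smul]
  rw [← hA, ← hB, ← hC, ← hD, hBfull, c5, c4]
  ext i j
  fin_cases i <;> fin_cases j <;>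
    simp [UX, e00, e01, e10, e11, Matrix.mul_apply, Fin.sum_univ_two,
      Matrix.conjTranspose_apply, Matrix.vecMul, dotProduct, Matrix.smul_apply,
      Matrix.add_apply, Matrix.one_apply, Matrix.trace_fin_two, smul_eq_mul,
      hA01, hA10, hA00, hA11] <;> ring
end classify




noncomputable def M0 : Matrix ((Fin 2) × (Fin 2)) ((Fin 2) × (Fin 2)) ℂ :=
  fun p q => (if p.1 = p.2 then 1 else 0) * (if q.1 = q.2 then 1 else 0)

lemma M0_psd : M0.PosSemidef := by
  refine Matrix.PosSemidef.of_dotProduct_mulVec_nonneg ?_ ?_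
  · ext p q
    by_cases h1 : p.1 = p.2 <;> by_cases h2 : q.1 = q.2 <;>
      simp [M0, Matrix.conjTranspose_apply, h1, h2]
  · intro z
    have key : dotProduct (star z) (M0 *ᵥ z)
        = star (z (0,0) + z (1,1)) * (z (0,0) + z (1,1)) := by
      simp [dotProduct, Matrix.mulVec, M0, Fintype.sum_prod_type, Fin.sum_univ_two,
        Fin.forall_fin_two]
      ring
    rw [key]
    exact star_mul_self_nonneg _

lemma choi_bounds (E : Matrix (Fin 2) (Fin 2) ℂ →ₗ[ℂ] Matrix (Fin 2) (Fin 2) ℂ)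
    (hCP : IsCompletelyPositive E) (lC : ℂ)
    (hE : ∀ M, E M = lC • M
      + (((1 - lC) / 2) • (Matrix.trace M • (1 : Matrix (Fin 2) (Fin 2) ℂ)))) :
    ∃ l : ℝ, (l : ℂ) = lC ∧ -(1/3) ≤ l ∧ l ≤ 1 := by
  have hPSD := hCP (Fin 2) M0 M0_psd
  have key : amplA E M0
      = lC • M0 + ((1 - lC)/2) • (1 : Matrix ((Fin 2) × (Fin 2)) ((Fin 2) × (Fin 2)) ℂ) := by
    ext p q
    show E (Matrix.of fun a b => M0 (p.1, a) (q.1, b)) p.2 q.2 = _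
    rw [hE]
    obtain ⟨p1, p2⟩ := p
    obtain ⟨q1, q2⟩ := q
    fin_cases p1 <;> fin_cases q1 <;> fin_cases p2 <;> fin_cases q2 <;>
      simp [M0, Matrix.trace_fin_two, Matrix.one_apply, Matrix.smul_apply, Matrix.add_apply,
        smul_eq_mul, Prod.ext_iff] <;> ring
  rw [key] at hPSD
  -- reality of lC
  have hherm := hPSD.1
  have hc : star lC = lC := by
    have h := congrFun (congrFun hherm ((0,0) : Fin 2 × Fin 2)) ((1,1) : Fin 2 × Fin 2)
    simpa [Matrix.conjTranspose_apply, M0, Matrix.one_apply, Matrix.smul_apply,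
      Matrix.add_apply, smul_eq_mul, Prod.ext_iff] using h
  set l := lC.re with hl
  have hreal : (l : ℂ) = lC := by
    rw [hl]
    exact Complex.conj_eq_iff_re.mp hc
  refine ⟨l, hreal, ?_, ?_⟩
  · -- lower bound from Ω vector
    have hq := hPSD.dotProduct_mulVec_nonneg (fun p : Fin 2 × Fin 2 => if p.1 = p.2 then (1:ℂ) else 0)
    have hsum : dotProduct (star (fun p : Fin 2 × Fin 2 => if p.1 = p.2 then (1:ℂ) else 0))
        ((lC • M0 + ((1 - lC)/2) • (1 : Matrix ((Fin 2) × (Fin 2)) ((Fin 2) × (Fin 2)) ℂ))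
          *ᵥ (fun p : Fin 2 × Fin 2 => if p.1 = p.2 then (1:ℂ) else 0))
        = ((1 + 3*l : ℝ) : ℂ) := by
      rw [← hreal]
      simp [dotProduct, Matrix.mulVec, M0, Fintype.sum_prod_type, Fin.sum_univ_two,
        Matrix.one_apply, Matrix.smul_apply, Matrix.add_apply, smul_eq_mul, Prod.ext_iff]
      push_cast
      ring
    rw [hsum, Complex.zero_le_real] at hq
    linarith
  · -- upper bound from diagonal entry
    have hq := hPSD.dotProduct_mulVec_nonneg (Pi.single ((0 : Fin 2),(1 : Fin 2)) (1:ℂ))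
    have hsum : dotProduct (star (Pi.single ((0 : Fin 2),(1 : Fin 2)) (1:ℂ)))
        ((lC • M0 + ((1 - lC)/2) • (1 : Matrix ((Fin 2) × (Fin 2)) ((Fin 2) × (Fin 2)) ℂ))
          *ᵥ (Pi.single ((0 : Fin 2),(1 : Fin 2)) (1:ℂ)))
        = (((1 - l)/2 : ℝ) : ℂ) := by
      rw [← hreal]
      simp [dotProduct, Matrix.mulVec, M0, Fintype.sum_prod_type, Fin.sum_univ_two,
        Matrix.one_apply, Matrix.smul_apply, Matrix.add_apply, smul_eq_mul, Prod.ext_iff,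
        Pi.single_apply]
    rw [hsum, Complex.zero_le_real] at hq
    linarith






noncomputable def depolM (l : ℝ) :
    Matrix (Fin 2) (Fin 2) ℂ →ₗ[ℂ] Matrix (Fin 2) (Fin 2) ℂ where
  toFun M := l • M + (((1 - l) / 2) • (Matrix.trace M • (1 : Matrix (Fin 2) (Fin 2) ℂ)))
  map_add' M N := by
    simp only [Matrix.trace_add, add_smul, smul_add]
    abel
  map_smul' c M := by
    ext i j
    by_cases h : i = j <;>
      simp [Matrix.trace_smul, Matrix.add_apply, Matrix.smul_apply, Matrix.one_apply, h,
        Complex.real_smul, smul_eq_mul] <;> ring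

lemma value_calc (l : ℝ) (rr xx : Fin 3 → ℝ)
    (E : Matrix (Fin 2) (Fin 2) ℂ →ₗ[ℂ] Matrix (Fin 2) (Fin 2) ℂ)
    (hE : ∀ M, E M = l • M
      + (((1 - l) / 2) • (Matrix.trace M • (1 : Matrix (Fin 2) (Fin 2) ℂ)))) :
    (Matrix.trace ((blochState xx)ᵀ * E (blochState rr))).re
      = (1 + l * (xx 0 * rr 0 - xx 1 * rr 1 + xx 2 * rr 2)) / 2 := by
  have hb : ∀ y : Fin 3 → ℝ, blochState y
      = !![(((1 + y 2)/2 : ℝ) : ℂ), ((y 0 : ℝ) : ℂ)/2 - ((y 1 : ℝ) : ℂ)/2 * Complex.I;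
           ((y 0 : ℝ) : ℂ)/2 + ((y 1 : ℝ) : ℂ)/2 * Complex.I, (((1 - y 2)/2 : ℝ) : ℂ)] := by
    intro y
    ext i j
    fin_cases i <;> fin_cases j <;>
      simp [blochState, pauliX, pauliY, pauliZ, Matrix.add_apply, Matrix.smul_apply,
        Matrix.one_apply, Complex.real_smul, smul_eq_mul] <;> push_cast <;> ring
  have hbT : (blochState xx)ᵀ
      = !![(((1 + xx 2)/2 : ℝ) : ℂ), ((xx 0 : ℝ) : ℂ)/2 + ((xx 1 : ℝ) : ℂ)/2 * Complex.I;
           ((xx 0 : ℝ) : ℂ)/2 - ((xx 1 : ℝ) : ℂ)/2 * Complex.I, (((1 - xx 2)/2 : ℝ) : ℂ)] := by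
    rw [hb]
    ext i j
    fin_cases i <;> fin_cases j <;> simp [Matrix.transpose_apply]
  rw [hE, hbT, hb rr]
  simp [Matrix.trace_fin_two, Matrix.mul_apply, Fin.sum_univ_two, Matrix.transpose_apply,
    Matrix.vecMul, dotProduct, Matrix.add_apply, Matrix.smul_apply, Matrix.one_apply, Complex.real_smul, smul_eq_mul,
    Complex.add_re, Complex.mul_re, Complex.mul_im, Complex.add_im, Complex.sub_re,
    Complex.sub_im, Complex.I_re, Complex.I_im, Complex.ofReal_re, Complex.ofReal_im,
    Complex.one_re, Complex.one_im, Complex.neg_re, Complex.neg_im]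
  ring

lemma real_smul_mat (c : ℝ) (M : Matrix (Fin 2) (Fin 2) ℂ) : c • M = (c : ℂ) • M := by
  ext i j; simp [Complex.real_smul]

/-- classification of SU(2)-covariant qubit channels as the depolarizing /
inverting family `E_λ` with `λ ∈ [-1/3, 1]`, and the resulting optimal value of
`Tr[η^T E(ρ)]` over covariant channels, equal to `½(1 + x̄·r)` if `x̄·r ≥ 0` and to
`½(1 - x̄·r/3)` otherwise, where `x̄ = (x₁, -x₂, x₃)`. -/
theorem su2_covariant_qubit_channels (r x : Fin 3 → ℝ)
    (hr : (r 0) ^ 2 + (r 1) ^ 2 + (r 2) ^ 2 ≤ 1)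
    (hx : (x 0) ^ 2 + (x 1) ^ 2 + (x 2) ^ 2 ≤ 1) :
    (∀ E : Matrix (Fin 2) (Fin 2) ℂ →ₗ[ℂ] Matrix (Fin 2) (Fin 2) ℂ,
      (IsCompletelyPositive E ∧ (∀ M, Matrix.trace (E M) = Matrix.trace M) ∧
          IsUnitarilyCovariant E)
        ↔ ∃ l : ℝ, l ∈ Set.Icc (-(1 / 3) : ℝ) 1 ∧
            ∀ M, E M = l • M + (((1 - l) / 2) • (Matrix.trace M • (1 : Matrix (Fin 2) (Fin 2) ℂ))))
    ∧ IsGreatest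
        {t : ℝ | ∃ E : Matrix (Fin 2) (Fin 2) ℂ →ₗ[ℂ] Matrix (Fin 2) (Fin 2) ℂ,
          IsCompletelyPositive E ∧ (∀ M, Matrix.trace (E M) = Matrix.trace M) ∧
          IsUnitarilyCovariant E ∧
          t = (Matrix.trace ((blochState x)ᵀ * E (blochState r))).re}
        (if 0 ≤ x 0 * r 0 - x 1 * r 1 + x 2 * r 2 then
          (1 + (x 0 * r 0 - x 1 * r 1 + x 2 * r 2)) / 2
        else (1 - (x 0 * r 0 - x 1 * r 1 + x 2 * r 2) / 3) / 2) := by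
  constructor
  · intro E
    constructor
    · rintro ⟨hCP, hTP, hCov⟩
      have hst := structural E hTP hCov
      obtain ⟨l, hreal, h1, h2⟩ := choi_bounds E hCP (E e01 0 1) hst
      refine ⟨l, ⟨h1, h2⟩, fun M => ?_⟩
      rw [real_smul_mat, real_smul_mat,
        show (((1 - l)/2 : ℝ) : ℂ) = (1 - (l:ℂ))/2 by push_cast; ring, hreal]
      exact hst M
    · rintro ⟨l, hl, hE⟩
      exact ⟨depol_cp l hl E hE, depol_tp l E hE, depol_cov l E hE⟩
  · constructor
    · split_ifs with hs
      · refine ⟨depolM 1, depol_cp 1 ⟨by norm_num, le_refl 1⟩ _ (fun M => rfl),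
          depol_tp 1 _ (fun M => rfl), depol_cov 1 _ (fun M => rfl), ?_⟩
        rw [value_calc 1 r x _ (fun M => rfl)]
        ring
      · refine ⟨depolM (-(1/3)), depol_cp (-(1/3)) ⟨le_refl _, by norm_num⟩ _ (fun M => rfl),
          depol_tp (-(1/3)) _ (fun M => rfl), depol_cov (-(1/3)) _ (fun M => rfl), ?_⟩
        rw [value_calc (-(1/3)) r x _ (fun M => rfl)]
        ring
    · rintro t ⟨E, hCP, hTP, hCov, rfl⟩
      have hst := structural E hTP hCov
      obtain ⟨l, hreal, h1, h2⟩ := choi_bounds E hCP (E e01 0 1) hst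
      have hE : ∀ M, E M = l • M
          + (((1 - l) / 2) • (Matrix.trace M • (1 : Matrix (Fin 2) (Fin 2) ℂ))) := by
        intro M
        rw [real_smul_mat, real_smul_mat,
          show (((1 - l)/2 : ℝ) : ℂ) = (1 - (l:ℂ))/2 by push_cast; ring, hreal]
        exact hst M
      rw [value_calc l r x E hE]
      split_ifs with hs
      · nlinarith
      · nlinarith
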